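/- arXiv:2112.13725 — 2 statements merged into one kernel-verified Lean document; each statement's English description precedes it below -/
import Mathlib

section
/- Assume the deterministic events ‖W‖ ≤ √(nd)+√m+√(2γ log n) and max_{1≤i≤n} ‖W_i A^T‖ ≤ (2√d+√(2γ log n))‖A‖ hold, let ε = 1/(32κ²√d) and ξ = 6, and assume σ ≤ (ε²d/(6κ²))·√n‖A‖/(√d·(√(nd)+√m+√(2γ n log n))). Then for every S ∈ N_ε ∩ N_{ξ,∞} and every 1 ≤ i ≤ n, the i-th d×d block of LS satisfies σ_min([LS]_i) ≥ (1 − ε²d)/κ². -/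
open MeasureTheory Matrix Filter

namespace GOPP

/-- Frobenius norm of a real matrix. -/
noncomputable def frob {α β : Type*} [Fintype α] [Fintype β] (X : Matrix α β ℝ) : ℝ :=
  Real.sqrt (∑ i, ∑ j, X i j ^ 2)

/-- Euclidean norm of a vector. -/
noncomputable def vnorm {β : Type*} [Fintype β] (v : β → ℝ) : ℝ :=
  Real.sqrt (∑ j, v j ^ 2)

/-- Operator (spectral) norm: the supremum of ‖Xu‖ over unit vectors u. -/
noncomputable def opNorm {α β : Type*} [Fintype α] [Fintype β] (X : Matrix α β ℝ) : ℝ :=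
  sSup {r : ℝ | ∃ u : β → ℝ, vnorm u = 1 ∧ r = vnorm (X.mulVec u)}

/-- Smallest singular value: the infimum of ‖uᵀX‖ over unit vectors u (for a d×m matrix
with d ≤ m this is the d-th largest singular value; for square matrices it is σ_min). -/
noncomputable def sigmaMin {α β : Type*} [Fintype α] [Fintype β] (X : Matrix α β ℝ) : ℝ :=
  sInf {r : ℝ | ∃ u : α → ℝ, vnorm u = 1 ∧ r = vnorm (Matrix.vecMul u X)}

/-- Condition number κ = σ_max/σ_min. -/
noncomputable def kappa {d m : ℕ} (A : Matrix (Fin d) (Fin m) ℝ) : ℝ :=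
  opNorm A / sigmaMin A

/-- Q is an orthogonal matrix. -/
def IsOrth {d : ℕ} (Q : Matrix (Fin d) (Fin d) ℝ) : Prop :=
  Qᵀ * Q = 1 ∧ Q * Qᵀ = 1

/-- Nuclear norm, via the dual characterization ‖M‖_* = max_{Q ∈ O(d)} ⟨Q, M⟩. -/
noncomputable def nuclearNorm {d : ℕ} (M : Matrix (Fin d) (Fin d) ℝ) : ℝ :=
  sSup {r : ℝ | ∃ Q : Matrix (Fin d) (Fin d) ℝ, IsOrth Q ∧ r = Matrix.trace (Qᵀ * M)}

/-- The i-th d×k block of an (nd)×k block matrix. -/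
def blk {n d k : ℕ} (S : Matrix (Fin n × Fin d) (Fin k) ℝ) (i : Fin n) :
    Matrix (Fin d) (Fin k) ℝ :=
  Matrix.of fun a b => S (i, a) b

/-- The i-th diagonal d×d block of an (nd)×(nd) matrix. -/
def dblk {n d : ℕ} (G : Matrix (Fin n × Fin d) (Fin n × Fin d) ℝ) (i : Fin n) :
    Matrix (Fin d) (Fin d) ℝ :=
  Matrix.of fun a b => G (i, a) (i, b)

/-- S ∈ O(d)^{⊗n}: each of the n d×d blocks of S is orthogonal. -/
def OrthBlocks {n d : ℕ} (S : Matrix (Fin n × Fin d) (Fin d) ℝ) : Prop :=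
  ∀ i, IsOrth (blk S i)

/-- Z ∈ ℝ^{nd×d}: the vertical stack of n copies of I_d. -/
def ZStack (n d : ℕ) : Matrix (Fin n × Fin d) (Fin d) ℝ :=
  Matrix.of fun p j => if p.2 = j then 1 else 0

/-- Vertical stack of n given d×k matrices. -/
def stack {n d k : ℕ} (B : Fin n → Matrix (Fin d) (Fin k) ℝ) :
    Matrix (Fin n × Fin d) (Fin k) ℝ :=
  Matrix.of fun p b => B p.1 p.2 b

/-- d_F(X,Y) = min_{Q ∈ O(d)} ‖X − YQ‖_F. -/
noncomputable def dF {n d : ℕ} (X Y : Matrix (Fin n × Fin d) (Fin d) ℝ) : ℝ :=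
  sInf {r : ℝ | ∃ Q, IsOrth Q ∧ r = frob (X - Y * Q)}

/-- R is a polar factor P(X) of X: an orthogonal global minimizer of ‖X − Q‖_F over O(d). -/
def IsPolar {d : ℕ} (X R : Matrix (Fin d) (Fin d) ℝ) : Prop :=
  IsOrth R ∧ ∀ Q : Matrix (Fin d) (Fin d) ℝ, IsOrth Q → frob (X - R) ≤ frob (X - Q)

/-- S = P_n(X): blockwise polar factor. -/
def IsPolarBlocks {n d : ℕ} (X S : Matrix (Fin n × Fin d) (Fin d) ℝ) : Prop :=
  ∀ i, IsPolar (blk X i) (blk S i)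

/-- U collects (an orthonormal basis of the span of) the top d left singular vectors of D:
U has orthonormal columns and maximizes the Ky Fan quantity trace(Uᵀ(DDᵀ)U). -/
def IsTopSingVecs {N : Type*} [Fintype N] {d m : ℕ} (D : Matrix N (Fin m) ℝ)
    (U : Matrix N (Fin d) ℝ) : Prop :=
  Uᵀ * U = 1 ∧ ∀ Q : Matrix N (Fin d) ℝ, Qᵀ * Q = 1 →
    Matrix.trace (Qᵀ * (D * Dᵀ) * Q) ≤ Matrix.trace (Uᵀ * (D * Dᵀ) * U)

/-- (U, S, V) is a top-d singular triple of D: orthonormal U, V, diagonal nonnegative S,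
DV = US, DᵀU = VS, and U spans a top-d left singular subspace. -/
def IsSVDTriple {N : Type*} [Fintype N] {d m : ℕ} (D : Matrix N (Fin m) ℝ)
    (U : Matrix N (Fin d) ℝ) (S : Matrix (Fin d) (Fin d) ℝ)
    (V : Matrix (Fin m) (Fin d) ℝ) : Prop :=
  Vᵀ * V = 1 ∧ (∀ a b, a ≠ b → S a b = 0) ∧ (∀ a, 0 ≤ S a a) ∧
    D * V = U * S ∧ Dᵀ * U = V * S ∧ IsTopSingVecs D U

/-- The generalized power method sequence with spectral initialization, run on the data
matrix D (so with C = DDᵀ): S⁰ = P_n(U) for top singular vectors U of D, and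
S^{t+1} = P_n(C Sᵗ). -/
def IsGPM {n d m : ℕ} (D : Matrix (Fin n × Fin d) (Fin m) ℝ)
    (S : ℕ → Matrix (Fin n × Fin d) (Fin d) ℝ) : Prop :=
  (∃ U, IsTopSingVecs D U ∧ IsPolarBlocks U (S 0)) ∧
    ∀ t, IsPolarBlocks (D * Dᵀ * S t) (S (t + 1))

/-- W^(i): W with its i-th block row replaced by 0. -/
def mask {n d m : ℕ} (W : Matrix (Fin n × Fin d) (Fin m) ℝ) (i : Fin n) :
    Matrix (Fin n × Fin d) (Fin m) ℝ :=
  Matrix.of fun p b => if p.1 = i then 0 else W p b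

/-- The noise matrix Δ = WAᵀZᵀ + ZAWᵀ + σWWᵀ. -/
noncomputable def delta {n d m : ℕ} (A : Matrix (Fin d) (Fin m) ℝ)
    (W : Matrix (Fin n × Fin d) (Fin m) ℝ) (σ : ℝ) :
    Matrix (Fin n × Fin d) (Fin n × Fin d) ℝ :=
  W * Aᵀ * (ZStack n d)ᵀ + ZStack n d * A * Wᵀ + σ • (W * Wᵀ)

/-- The i-th block column Δ_i = WAᵀ + ZAW_iᵀ + σWW_iᵀ of Δ. -/
noncomputable def deltaCol {n d m : ℕ} (A : Matrix (Fin d) (Fin m) ℝ)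
    (W : Matrix (Fin n × Fin d) (Fin m) ℝ) (σ : ℝ) (i : Fin n) :
    Matrix (Fin n × Fin d) (Fin d) ℝ :=
  W * Aᵀ + ZStack n d * A * (blk W i)ᵀ + σ • (W * (blk W i)ᵀ)

/-- The operator L S = C S/(n‖A‖²) with C = ZAAᵀZᵀ + σΔ. -/
noncomputable def Lop {n d m : ℕ} (A : Matrix (Fin d) (Fin m) ℝ)
    (W : Matrix (Fin n × Fin d) (Fin m) ℝ) (σ : ℝ)
    (S : Matrix (Fin n × Fin d) (Fin d) ℝ) : Matrix (Fin n × Fin d) (Fin d) ℝ :=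
  ((n : ℝ) * opNorm A ^ 2)⁻¹ •
    ((ZStack n d * A * Aᵀ * (ZStack n d)ᵀ + σ • delta A W σ) * S)

/-- √(nd) + √m + √(2γ n log n). -/
noncomputable def bnd1 (n d m : ℕ) (γ : ℝ) : ℝ :=
  Real.sqrt ((n : ℝ) * d) + Real.sqrt (m : ℝ) + Real.sqrt (2 * γ * n * Real.log n)

/-- √(nd) + √m + √(2γ log n). -/
noncomputable def bnd2 (n d m : ℕ) (γ : ℝ) : ℝ :=
  Real.sqrt ((n : ℝ) * d) + Real.sqrt (m : ℝ) + Real.sqrt (2 * γ * Real.log n)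

/-- The basin of attraction N_ε. -/
def memNeps {n d : ℕ} (ε : ℝ) (S : Matrix (Fin n × Fin d) (Fin d) ℝ) : Prop :=
  OrthBlocks S ∧ dF S (ZStack n d) ≤ ε * Real.sqrt ((n : ℝ) * d)

/-- The basin of attraction N_{ξ,∞}. -/
def memNxi {n d m : ℕ} (W : Matrix (Fin n × Fin d) (Fin m) ℝ) (γ ξ : ℝ)
    (S : Matrix (Fin n × Fin d) (Fin d) ℝ) : Prop :=
  OrthBlocks S ∧ ∀ i, frob (blk W i * Wᵀ * S) ≤ ξ * Real.sqrt (d : ℝ) * bnd1 n d m γ ^ 2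

/-- The distribution of a matrix with i.i.d. standard Gaussian N(0,1) entries. -/
noncomputable def stdGaussian (ι κ : Type*) [Fintype ι] [Fintype κ] :
    Measure (ι → κ → ℝ) :=
  Measure.pi fun _ : ι => Measure.pi fun _ : κ => ProbabilityTheory.gaussianReal 0 1

set_option linter.unusedSectionVars false
set_option linter.unusedVariables false
section Helpers

variable {α β γ : Type*} [Fintype α] [Fintype β] [Fintype γ]

noncomputable def toE (v : β → ℝ) : EuclideanSpace ℝ β :=
  (WithLp.equiv 2 (β → ℝ)).symm v

lemma vnorm_eq_norm (v : β → ℝ) : vnorm v = ‖toE v‖ := by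
  rw [EuclideanSpace.norm_eq]
  simp only [Real.norm_eq_abs, sq_abs]
  rfl

lemma toE_add (u v : β → ℝ) : toE (u + v) = toE u + toE v := rfl
lemma toE_smul (c : ℝ) (u : β → ℝ) : toE (c • u) = c • toE u := rfl

lemma toE_sum {ι : Type*} (s : Finset ι) (f : ι → β → ℝ) :
    toE (∑ i ∈ s, f i) = ∑ i ∈ s, toE (f i) := by
  classical
  induction s using Finset.induction with
  | empty => rfl
  | insert _ _ h ih => rw [Finset.sum_insert h, Finset.sum_insert h, ← ih]; rfl

lemma vnorm_nonneg' (v : β → ℝ) : 0 ≤ vnorm v := Real.sqrt_nonneg _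

lemma vnorm_sq (v : β → ℝ) : vnorm v ^ 2 = ∑ j, v j ^ 2 :=
  Real.sq_sqrt (Finset.sum_nonneg fun _ _ => sq_nonneg _)

lemma vnorm_add_le (u v : β → ℝ) : vnorm (u + v) ≤ vnorm u + vnorm v := by
  simp only [vnorm_eq_norm, toE_add]; exact norm_add_le _ _

lemma vnorm_smul (c : ℝ) (u : β → ℝ) : vnorm (c • u) = |c| * vnorm u := by
  simp only [vnorm_eq_norm, toE_smul, norm_smul, Real.norm_eq_abs]

lemma dot_le (u v : β → ℝ) : u ⬝ᵥ v ≤ vnorm u * vnorm v := by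
  have h := real_inner_le_norm (toE u) (toE v)
  rw [← vnorm_eq_norm, ← vnorm_eq_norm] at h
  refine le_trans (le_of_eq ?_) h
  rw [PiLp.inner_apply]
  simp [dotProduct, toE, mul_comm]

lemma vnorm_sum_le {ι : Type*} (s : Finset ι) (f : ι → β → ℝ) :
    vnorm (∑ i ∈ s, f i) ≤ ∑ i ∈ s, vnorm (f i) := by
  simp only [vnorm_eq_norm, toE_sum]; exact norm_sum_le _ _

lemma dot_self_eq (v : β → ℝ) : v ⬝ᵥ v = vnorm v ^ 2 := by
  rw [vnorm_sq]; simp [dotProduct, sq]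

lemma vnorm_sub_ge (u v : β → ℝ) : vnorm u - vnorm v ≤ vnorm (u + v) := by
  have h1 := vnorm_add_le (u + v) (-v)
  have h2 : vnorm (-v) = vnorm v := by
    have e : (-v : β → ℝ) = (-1 : ℝ) • v := by funext j; simp
    rw [e, vnorm_smul]; simp
  simp only [add_neg_cancel_right] at h1
  linarith

lemma vnorm_pos {v : β → ℝ} (h : v ≠ 0) : 0 < vnorm v := by
  rw [vnorm_eq_norm, norm_pos_iff]
  intro hz
  exact h ((WithLp.equiv 2 (β → ℝ)).symm.injective hz)

lemma le_of_sq_le' {x y : ℝ} (hx : 0 ≤ x) (hy : 0 ≤ y) (h : x ^ 2 ≤ y ^ 2) : x ≤ y := by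
  nlinarith

/-! frob lemmas -/

lemma frob_nonneg' (X : Matrix α β ℝ) : 0 ≤ frob X := Real.sqrt_nonneg _

lemma frob_sq (X : Matrix α β ℝ) : frob X ^ 2 = ∑ i, ∑ j, X i j ^ 2 :=
  Real.sq_sqrt (Finset.sum_nonneg fun _ _ => Finset.sum_nonneg fun _ _ => sq_nonneg _)

lemma frob_transpose (X : Matrix α β ℝ) : frob Xᵀ = frob X := by
  unfold frob
  rw [Finset.sum_comm]
  rfl

lemma frob_eq_vnorm (X : Matrix α β ℝ) : frob X = vnorm (fun p : α × β => X p.1 p.2) := by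
  unfold frob vnorm
  congr 1
  exact (Fintype.sum_prod_type (fun p : α × β => X p.1 p.2 ^ 2)).symm

lemma frob_add_le (X Y : Matrix α β ℝ) : frob (X + Y) ≤ frob X + frob Y := by
  rw [frob_eq_vnorm, frob_eq_vnorm, frob_eq_vnorm]
  have e : (fun p : α × β => (X + Y) p.1 p.2)
      = (fun p : α × β => X p.1 p.2) + (fun p : α × β => Y p.1 p.2) := by
    funext p; simp
  rw [e]
  exact vnorm_add_le _ _

lemma frob_smul (c : ℝ) (X : Matrix α β ℝ) : frob (c • X) = |c| * frob X := by
  rw [frob_eq_vnorm, frob_eq_vnorm, ← vnorm_smul]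
  congr 1

lemma frob_sum_le {ι : Type*} (s : Finset ι) (f : ι → Matrix α β ℝ) :
    frob (∑ i ∈ s, f i) ≤ ∑ i ∈ s, frob (f i) := by
  rw [frob_eq_vnorm]
  have e : (fun p : α × β => (∑ i ∈ s, f i) p.1 p.2)
      = ∑ i ∈ s, (fun p : α × β => f i p.1 p.2) := by
    funext p; simp [Matrix.sum_apply]
  rw [e]
  exact le_trans (vnorm_sum_le _ _) (Finset.sum_le_sum fun i _ => le_of_eq (frob_eq_vnorm _).symm)

/-! vecMul / mulVec helpers -/

lemma vecMul_smul_mat (v : α → ℝ) (c : ℝ) (X : Matrix α β ℝ) :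
    v ᵥ* (c • X) = c • (v ᵥ* X) := by
  funext j
  simp [Matrix.vecMul, dotProduct, Finset.mul_sum, Matrix.smul_apply]
  ring_nf
  apply Finset.sum_congr rfl
  intro i _
  ring

lemma vecMul_sum_mat {ι : Type*} (s : Finset ι) (v : α → ℝ) (f : ι → Matrix α β ℝ) :
    v ᵥ* (∑ i ∈ s, f i) = ∑ i ∈ s, v ᵥ* (f i) := by
  classical
  induction s using Finset.induction with
  | empty => simp [Matrix.vecMul_zero]
  | insert _ _ h ih => rw [Finset.sum_insert h, Finset.sum_insert h, Matrix.vecMul_add, ih]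

lemma sum_dotProduct' {ι : Type*} (s : Finset ι) (f : ι → β → ℝ) (v : β → ℝ) :
    (∑ i ∈ s, f i) ⬝ᵥ v = ∑ i ∈ s, f i ⬝ᵥ v := by
  classical
  induction s using Finset.induction with
  | empty => simp
  | insert _ _ h ih => rw [Finset.sum_insert h, Finset.sum_insert h, add_dotProduct, ih]

lemma mulVec_vnorm_le_frob (X : Matrix α β ℝ) (v : β → ℝ) :
    vnorm (X.mulVec v) ≤ frob X * vnorm v := by
  apply le_of_sq_le' (vnorm_nonneg' _) (mul_nonneg (frob_nonneg' _) (vnorm_nonneg' _))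
  rw [mul_pow, vnorm_sq, frob_sq, vnorm_sq, Finset.sum_mul]
  apply Finset.sum_le_sum
  intro i _
  have h := Finset.sum_mul_sq_le_sq_mul_sq Finset.univ (fun j => X i j) v
  simpa [Matrix.mulVec, dotProduct] using h

lemma vecMul_vnorm_le_frob (v : α → ℝ) (X : Matrix α β ℝ) :
    vnorm (v ᵥ* X) ≤ frob X * vnorm v := by
  rw [← Matrix.mulVec_transpose, ← frob_transpose]
  exact mulVec_vnorm_le_frob _ _

lemma exists_unit (α : Type*) [Fintype α] [Nonempty α] : ∃ u : α → ℝ, vnorm u = 1 := by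
  classical
  obtain ⟨i₀⟩ := ‹Nonempty α›
  refine ⟨fun j => if j = i₀ then 1 else 0, ?_⟩
  unfold vnorm
  have e : ∀ j : α, (if j = i₀ then (1:ℝ) else 0) ^ 2 = if j = i₀ then 1 else 0 := by
    intro j; split <;> norm_num
  rw [Finset.sum_congr rfl fun j _ => e j, Finset.sum_ite_eq' Finset.univ i₀ (fun _ => (1:ℝ))]
  simp

/-! opNorm lemmas -/

lemma opNorm_bddAbove (X : Matrix α β ℝ) :
    BddAbove {r : ℝ | ∃ u : β → ℝ, vnorm u = 1 ∧ r = vnorm (X.mulVec u)} := by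
  refine ⟨frob X, ?_⟩
  rintro r ⟨u, hu, rfl⟩
  calc vnorm (X.mulVec u) ≤ frob X * vnorm u := mulVec_vnorm_le_frob X u
  _ = frob X := by rw [hu, mul_one]

lemma unit_mulVec_le_opNorm [Nonempty β] (X : Matrix α β ℝ) {u : β → ℝ} (hu : vnorm u = 1) :
    vnorm (X.mulVec u) ≤ opNorm X :=
  le_csSup (opNorm_bddAbove X) ⟨u, hu, rfl⟩

lemma opNorm_nonneg [Nonempty β] (X : Matrix α β ℝ) : 0 ≤ opNorm X := by
  obtain ⟨u, hu⟩ := exists_unit β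
  exact le_trans (vnorm_nonneg' _) (unit_mulVec_le_opNorm X hu)

lemma mulVec_le_opNorm [Nonempty β] (X : Matrix α β ℝ) (v : β → ℝ) :
    vnorm (X.mulVec v) ≤ opNorm X * vnorm v := by
  by_cases h : v = 0
  · subst h
    have z1 : vnorm (0 : α → ℝ) = 0 := by unfold vnorm; simp
    have z2 : vnorm (0 : β → ℝ) = 0 := by unfold vnorm; simp
    rw [Matrix.mulVec_zero, z1, z2, mul_zero]
  · have hv : 0 < vnorm v := vnorm_pos h
    set u : β → ℝ := (vnorm v)⁻¹ • v with hu_def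
    have hu : vnorm u = 1 := by
      rw [hu_def, vnorm_smul, abs_of_pos (inv_pos.mpr hv), inv_mul_cancel₀ hv.ne']
    have hvu : X.mulVec v = vnorm v • X.mulVec u := by
      rw [hu_def, Matrix.mulVec_smul, smul_smul, mul_inv_cancel₀ hv.ne', one_smul]
    rw [hvu, vnorm_smul, abs_of_pos hv, mul_comm]
    exact mul_le_mul_of_nonneg_right (unit_mulVec_le_opNorm X hu) hv.le

lemma vecMul_le_opNorm [Nonempty β] (X : Matrix α β ℝ) (v : α → ℝ) :
    vnorm (v ᵥ* X) ≤ opNorm X * vnorm v := by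
  set w := v ᵥ* X with hw
  rcases eq_or_lt_of_le (vnorm_nonneg' w) with h | h
  · rw [← h]
    exact mul_nonneg (opNorm_nonneg X) (vnorm_nonneg' v)
  · have h1 : vnorm w ^ 2 = v ⬝ᵥ X.mulVec w := by
      rw [← dot_self_eq, hw, Matrix.dotProduct_mulVec]
    have h2 : v ⬝ᵥ X.mulVec w ≤ vnorm v * (opNorm X * vnorm w) :=
      le_trans (dot_le _ _) (mul_le_mul_of_nonneg_left (mulVec_le_opNorm X w) (vnorm_nonneg' v))
    have h3 : vnorm w * vnorm w ≤ (opNorm X * vnorm v) * vnorm w := by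
      nlinarith
    exact le_of_mul_le_mul_right h3 h

/-! sigmaMin lemmas -/

lemma sigmaMin_bddBelow (X : Matrix α β ℝ) :
    BddBelow {r : ℝ | ∃ u : α → ℝ, vnorm u = 1 ∧ r = vnorm (Matrix.vecMul u X)} := by
  refine ⟨0, ?_⟩
  rintro r ⟨u, hu, rfl⟩
  exact vnorm_nonneg' _

lemma sigmaMin_le (X : Matrix α β ℝ) {u : α → ℝ} (hu : vnorm u = 1) :
    sigmaMin X ≤ vnorm (u ᵥ* X) :=
  csInf_le (sigmaMin_bddBelow X) ⟨u, hu, rfl⟩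

lemma le_sigmaMin [Nonempty α] (X : Matrix α β ℝ) (b : ℝ)
    (h : ∀ u : α → ℝ, vnorm u = 1 → b ≤ vnorm (u ᵥ* X)) : b ≤ sigmaMin X := by
  obtain ⟨u₀, hu₀⟩ := exists_unit α
  refine le_csInf ⟨vnorm (u₀ ᵥ* X), u₀, hu₀, rfl⟩ ?_
  rintro r ⟨u, hu, rfl⟩
  exact h u hu

lemma sigmaMin_le_opNorm [Nonempty α] [Nonempty β] (X : Matrix α β ℝ) :
    sigmaMin X ≤ opNorm X := by
  obtain ⟨u, hu⟩ := exists_unit α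
  calc sigmaMin X ≤ vnorm (u ᵥ* X) := sigmaMin_le X hu
  _ ≤ opNorm X * vnorm u := vecMul_le_opNorm X u
  _ = opNorm X := by rw [hu, mul_one]

/-! frob of products -/

lemma frob_mul_le_opNorm [Nonempty β] (X : Matrix α β ℝ) (Y : Matrix β γ ℝ) :
    frob (X * Y) ≤ opNorm X * frob Y := by
  apply le_of_sq_le' (frob_nonneg' _) (mul_nonneg (opNorm_nonneg X) (frob_nonneg' _))
  rw [mul_pow, frob_sq, frob_sq, Finset.sum_comm (s := Finset.univ) (t := Finset.univ)]
  rw [show ∑ j : β, ∑ k : γ, Y j k ^ 2 = ∑ k : γ, ∑ j : β, Y j k ^ 2 from Finset.sum_comm, Finset.mul_sum]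
  apply Finset.sum_le_sum
  intro k _
  have hcol : ∀ i : α, (X * Y) i k = (X.mulVec fun j => Y j k) i := by
    intro i; simp [Matrix.mul_apply, Matrix.mulVec, dotProduct]
  calc ∑ i : α, (X * Y) i k ^ 2 = vnorm (X.mulVec fun j => Y j k) ^ 2 := by
        rw [vnorm_sq]; exact Finset.sum_congr rfl fun i _ => by rw [hcol i]
  _ ≤ (opNorm X * vnorm (fun j => Y j k)) ^ 2 := by
        have := mulVec_le_opNorm X (fun j => Y j k)
        have h0 : 0 ≤ opNorm X * vnorm (fun j => Y j k) :=
          mul_nonneg (opNorm_nonneg X) (vnorm_nonneg' _)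
        nlinarith [vnorm_nonneg' (X.mulVec fun j => Y j k)]
  _ = opNorm X ^ 2 * (∑ j : β, Y j k ^ 2) := by rw [mul_pow, vnorm_sq]

lemma frob_transpose_mul_le [Nonempty α] (X : Matrix β α ℝ) (Y : Matrix β γ ℝ) :
    frob (Xᵀ * Y) ≤ opNorm X * frob Y := by
  apply le_of_sq_le' (frob_nonneg' _) (mul_nonneg (opNorm_nonneg X) (frob_nonneg' _))
  rw [mul_pow, frob_sq, frob_sq, Finset.sum_comm (s := Finset.univ) (t := Finset.univ)]
  rw [show ∑ j : β, ∑ k : γ, Y j k ^ 2 = ∑ k : γ, ∑ j : β, Y j k ^ 2 from Finset.sum_comm, Finset.mul_sum]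
  apply Finset.sum_le_sum
  intro k _
  have hcol : ∀ i : α, (Xᵀ * Y) i k = ((fun j => Y j k) ᵥ* X) i := by
    intro i; simp [Matrix.mul_apply, Matrix.vecMul, dotProduct, Matrix.transpose_apply, mul_comm]
  calc ∑ i : α, (Xᵀ * Y) i k ^ 2 = vnorm ((fun j => Y j k) ᵥ* X) ^ 2 := by
        rw [vnorm_sq]; exact Finset.sum_congr rfl fun i _ => by rw [hcol i]
  _ ≤ (opNorm X * vnorm (fun j => Y j k)) ^ 2 := by
        have := vecMul_le_opNorm X (fun j => Y j k)
        have h0 : 0 ≤ opNorm X * vnorm (fun j => Y j k) :=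
          mul_nonneg (opNorm_nonneg X) (vnorm_nonneg' _)
        nlinarith [vnorm_nonneg' ((fun j => Y j k) ᵥ* X)]
  _ = opNorm X ^ 2 * (∑ j : β, Y j k ^ 2) := by rw [mul_pow, vnorm_sq]

/-! misc identities -/

lemma vecMul_dot (y : α → ℝ) (M N : Matrix α β ℝ) :
    (y ᵥ* M) ⬝ᵥ (y ᵥ* N) = y ⬝ᵥ ((M * Nᵀ) *ᵥ y) := by
  rw [← Matrix.mulVec_transpose N y, Matrix.dotProduct_mulVec, Matrix.vecMul_vecMul,
    Matrix.dotProduct_mulVec]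

lemma isOrth_one {d : ℕ} : IsOrth (1 : Matrix (Fin d) (Fin d) ℝ) := by
  constructor <;> simp

lemma vnorm_vecMul_orth {d : ℕ} {Q : Matrix (Fin d) (Fin d) ℝ} (hQ : IsOrth Q) (y : Fin d → ℝ) :
    vnorm (y ᵥ* Q) = vnorm y := by
  have h := vecMul_dot y Q Q
  rw [hQ.2, Matrix.one_mulVec, dot_self_eq, dot_self_eq] at h
  nlinarith [vnorm_nonneg' (y ᵥ* Q), vnorm_nonneg' y]

end Helpers

set_option maxHeartbeats 2000000
section Blocks

variable {n d k q : ℕ}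

lemma blk_mul (X : Matrix (Fin n × Fin d) (Fin k) ℝ) (M : Matrix (Fin k) (Fin q) ℝ) (i : Fin n) :
    blk (X * M) i = blk X i * M := by
  ext a b
  simp [blk, Matrix.mul_apply]

lemma blk_add (X Y : Matrix (Fin n × Fin d) (Fin k) ℝ) (i : Fin n) :
    blk (X + Y) i = blk X i + blk Y i := rfl

lemma blk_sub (X Y : Matrix (Fin n × Fin d) (Fin k) ℝ) (i : Fin n) :
    blk (X - Y) i = blk X i - blk Y i := rfl

lemma blk_smul (c : ℝ) (X : Matrix (Fin n × Fin d) (Fin k) ℝ) (i : Fin n) :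
    blk (c • X) i = c • blk X i := rfl

lemma blk_Z (i : Fin n) : blk (ZStack n d) i = (1 : Matrix (Fin d) (Fin d) ℝ) := by
  ext a b
  simp [blk, ZStack, Matrix.one_apply]

lemma Zt_mul (S : Matrix (Fin n × Fin d) (Fin k) ℝ) :
    (ZStack n d)ᵀ * S = ∑ j : Fin n, blk S j := by
  ext a b
  simp [Matrix.mul_apply, ZStack, blk, Matrix.sum_apply, Fintype.sum_prod_type,
    Matrix.transpose_apply]

lemma frob_sq_blocks (X : Matrix (Fin n × Fin d) (Fin k) ℝ) :
    frob X ^ 2 = ∑ i : Fin n, frob (blk X i) ^ 2 := by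
  rw [frob_sq]
  calc ∑ i : Fin n × Fin d, ∑ j, X i j ^ 2
      = ∑ a : Fin n, ∑ b : Fin d, ∑ j, X (a, b) j ^ 2 :=
        Fintype.sum_prod_type (fun i : Fin n × Fin d => ∑ j, X i j ^ 2)
  _ = ∑ a : Fin n, frob (blk X a) ^ 2 :=
        Finset.sum_congr rfl fun a _ => (frob_sq (blk X a)).symm

lemma frob_of_isOrth {Q : Matrix (Fin d) (Fin d) ℝ} (h : IsOrth Q) :
    frob Q = Real.sqrt (d : ℝ) := by
  unfold frob
  congr 1
  have e : ∑ a, ∑ b, Q a b ^ 2 = Matrix.trace (Qᵀ * Q) := by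
    unfold Matrix.trace
    rw [Finset.sum_comm]
    apply Finset.sum_congr rfl
    intro a _
    simp [Matrix.mul_apply, Matrix.transpose_apply, Matrix.diag, sq]
  rw [e, h.1, Matrix.trace_one]
  simp

end Blocks

/-- Proposition 5.5, second part: for S ∈ N_ε ∩ N_{ξ,∞}, every d×d block of
LS has smallest singular value at least (1 − ε²d)/κ². -/
theorem Lop_block_sigmaMin (n d m : ℕ) (hn : 1 ≤ n) (hd : 1 ≤ d) (hm : d ≤ m)
    (A : Matrix (Fin d) (Fin m) ℝ) (hA : 0 < sigmaMin A)
    (W : Matrix (Fin n × Fin d) (Fin m) ℝ) (σ γ : ℝ) (hσ : 0 < σ) (hγ : 2 ≤ γ)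
    (hW : opNorm W ≤ bnd2 n d m γ)
    (hWA : ∀ i, opNorm (blk W i * Aᵀ) ≤
      (2 * Real.sqrt (d : ℝ) + Real.sqrt (2 * γ * Real.log n)) * opNorm A)
    (ε ξ : ℝ) (hε : ε = 1 / (32 * kappa A ^ 2 * Real.sqrt (d : ℝ))) (hξ : ξ = 6)
    (hσ2 : σ ≤ ε ^ 2 * (d : ℝ) / (6 * kappa A ^ 2) *
      (Real.sqrt (n : ℝ) * opNorm A) / (Real.sqrt (d : ℝ) * bnd1 n d m γ)) :
    ∀ S : Matrix (Fin n × Fin d) (Fin d) ℝ, memNeps ε S → memNxi W γ ξ S → ∀ i,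
      (1 - ε ^ 2 * (d : ℝ)) / kappa A ^ 2 ≤ sigmaMin (blk (Lop A W σ S) i) := by
  intro S hS1 hS2 i
  obtain ⟨hSorth, hSdF⟩ := hS1
  obtain ⟨-, hSxi⟩ := hS2
  subst hξ
  have hd0 : 0 < d := hd
  have hn0 : 0 < n := hn
  have hm0 : 0 < m := lt_of_lt_of_le hd0 hm
  haveI hneD : Nonempty (Fin d) := ⟨⟨0, hd0⟩⟩
  haveI hneN : Nonempty (Fin n) := ⟨⟨0, hn0⟩⟩
  haveI hneM : Nonempty (Fin m) := ⟨⟨0, hm0⟩⟩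
  classical
  set a := opNorm A with ha_def
  set s := sigmaMin A with hs_def
  have hs : 0 < s := hA
  have hsa : s ≤ a := sigmaMin_le_opNorm A
  have ha : 0 < a := lt_of_lt_of_le hs hsa
  have hκ : kappa A = a / s := rfl
  have hκ2 : kappa A ^ 2 = a ^ 2 / s ^ 2 := by rw [hκ, div_pow]
  have hdn : (1:ℝ) ≤ (d:ℝ) := by exact_mod_cast hd
  have hnn : (1:ℝ) ≤ (n:ℝ) := by exact_mod_cast hn
  have hmn : (1:ℝ) ≤ (m:ℝ) := by exact_mod_cast hm0
  have hn0' : (0:ℝ) < (n:ℝ) := by linarith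
  set sd := Real.sqrt (d : ℝ) with hsd_def
  set sn := Real.sqrt (n : ℝ) with hsn_def
  set sm := Real.sqrt (m : ℝ) with hsm_def
  set sL := Real.sqrt (2 * γ * Real.log n) with hsL_def
  have hsd1 : 1 ≤ sd := by
    rw [hsd_def]; have := Real.sqrt_le_sqrt hdn; simpa using this
  have hsn1 : 1 ≤ sn := by
    rw [hsn_def]; have := Real.sqrt_le_sqrt hnn; simpa using this
  have hsm1 : 1 ≤ sm := by
    rw [hsm_def]; have := Real.sqrt_le_sqrt hmn; simpa using this
  have hsd2 : sd * sd = (d:ℝ) := by rw [hsd_def]; exact Real.mul_self_sqrt (by positivity)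
  have hsn2 : sn * sn = (n:ℝ) := by rw [hsn_def]; exact Real.mul_self_sqrt (by positivity)
  have hsLnn : 0 ≤ sL := by rw [hsL_def]; exact Real.sqrt_nonneg _
  have hsd0 : 0 < sd := lt_of_lt_of_le one_pos hsd1
  have hsn0 : 0 < sn := lt_of_lt_of_le one_pos hsn1
  have hsm0 : 0 < sm := lt_of_lt_of_le one_pos hsm1
  set β1 := bnd1 n d m γ with hβ1_def
  set β2 := bnd2 n d m γ with hβ2_def
  have hβ1 : β1 = sn * sd + sm + sn * sL := by
    rw [hβ1_def]
    unfold bnd1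
    rw [hsn_def, hsd_def, hsm_def, hsL_def]
    rw [Real.sqrt_mul (by positivity : (0:ℝ) ≤ (n:ℝ))]
    rw [show 2 * γ * (n:ℝ) * Real.log n = (n:ℝ) * (2 * γ * Real.log n) by ring]
    rw [Real.sqrt_mul (by positivity : (0:ℝ) ≤ (n:ℝ))]
  have hβ2 : β2 = sn * sd + sm + sL := by
    rw [hβ2_def]
    unfold bnd2
    rw [hsn_def, hsd_def, hsm_def, hsL_def]
    rw [Real.sqrt_mul (by positivity : (0:ℝ) ≤ (n:ℝ))]
  have hβ1pos : 0 < β1 := by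
    rw [hβ1]
    have h1 := mul_pos hsn0 hsd0
    have h2 := mul_nonneg hsn0.le hsLnn
    linarith
  have hε' : ε = s^2/(32*a^2*sd) := by
    rw [hε, hκ2]
    field_simp
  have hεpos : 0 < ε := by rw [hε']; positivity
  have hsL1 : n = 1 ∨ 1 ≤ sL := by
    rcases eq_or_lt_of_le hn with h | h
    · exact Or.inl h.symm
    · right
      have h2 : (2:ℝ) ≤ (n:ℝ) := by exact_mod_cast h
      have hlog : Real.log 2 ≤ Real.log n := Real.log_le_log (by norm_num) h2
      have hl2 : (0.6931471803:ℝ) < Real.log 2 := Real.log_two_gt_d9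
      have hL : (1:ℝ) ≤ 2 * γ * Real.log n := by
        have hp : 2 * Real.log 2 ≤ γ * Real.log (n:ℝ) :=
          mul_le_mul hγ hlog (by linarith) (by linarith)
        linarith
      rw [hsL_def]
      have := Real.sqrt_le_sqrt hL
      simpa using this
  have hbig : β1 ≤ 1024*sd*(2*sm + sn*sL) := by
    rw [hβ1]
    rcases hsL1 with h1 | h1
    · have hsn1' : sn = 1 := by rw [hsn_def, h1]; simp
      rw [hsn1']
      have p1 : sd ≤ 1024*(sd*sm) := by
        have := mul_nonneg hsd0.le (by linarith : (0:ℝ) ≤ 1024*sm - 1)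
        ring_nf at this ⊢
        linarith
      have p2 : sm ≤ 1024*(sd*sm) := by
        have := mul_nonneg hsm0.le (by linarith : (0:ℝ) ≤ 1024*sd - 1)
        ring_nf at this ⊢
        linarith
      have p3 : sL ≤ 1024*(sd*sL) := by
        have := mul_nonneg hsLnn (by linarith : (0:ℝ) ≤ 1024*sd - 1)
        ring_nf at this ⊢
        linarith
      have goal2 : 1*sd + sm + 1*sL ≤ 1024*sd*(2*sm + 1*sL) := by
        have e : 1024*sd*(2*sm + 1*sL) = 2*(1024*(sd*sm)) + 1024*(sd*sL) := by ring
        rw [e]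
        have h0 : (0:ℝ) ≤ 1024*(sd*sm) := by positivity
        linarith
      linarith [goal2]
    · have p1 : sn*sd ≤ 512*(sd*(sn*sL)) := by
        have := mul_nonneg (mul_nonneg hsd0.le hsn0.le) (by linarith : (0:ℝ) ≤ 512*sL - 1)
        ring_nf at this ⊢
        linarith
      have p2 : sm ≤ 2048*(sd*sm) := by
        have := mul_nonneg hsm0.le (by linarith : (0:ℝ) ≤ 2048*sd - 1)
        ring_nf at this ⊢
        linarith
      have p3 : sn*sL ≤ 512*(sd*(sn*sL)) := by
        have := mul_nonneg (mul_nonneg hsn0.le hsLnn) (by linarith : (0:ℝ) ≤ 512*sd - 1)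
        ring_nf at this ⊢
        linarith
      have e : 1024*sd*(2*sm + sn*sL) = 2048*(sd*sm) + 512*(sd*(sn*sL)) + 512*(sd*(sn*sL)) := by
        ring
      rw [e]
      linarith
  have hβ2nn : 0 ≤ β2 := le_trans (opNorm_nonneg W) hW
  set P1 := (2*sd+sL)*a*((n:ℝ)*sd) + a*(β2*(sn*sd)) with hP1_def
  set P3 := 6*sd*β1^2 with hP3_def
  have hP1nn : 0 ≤ P1 := by
    rw [hP1_def]
    have h1 : (0:ℝ) ≤ 2*sd+sL := by linarith
    have h2 : (0:ℝ) ≤ (n:ℝ)*sd := by positivity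
    have h3 : (0:ℝ) ≤ sn*sd := by positivity
    have := mul_nonneg (mul_nonneg h1 ha.le) h2
    have := mul_nonneg ha.le (mul_nonneg hβ2nn h3)
    linarith
  have hP3nn : 0 ≤ P3 := by rw [hP3_def]; positivity
  have hεle : (ε^2*s^2/a^2)*sd*β1 ≤ 2*sm + sn*sL := by
    have e : (ε^2*s^2/a^2)*sd*β1 = s^6*β1/(1024*a^6*sd) := by
      rw [hε']
      field_simp
      ring
    have h6 : s^6 ≤ a^6 := by
      have := pow_le_pow_left₀ hs.le hsa 6
      exact this
    have le1 : s^6*β1/(1024*a^6*sd) ≤ β1/(1024*sd) := by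
      rw [div_le_div_iff₀ (by positivity) (by positivity)]
      have hint := mul_nonneg (mul_nonneg (sub_nonneg.mpr h6) hβ1pos.le) hsd0.le
      ring_nf at hint ⊢
      linarith
    have le2 : β1/(1024*sd) ≤ 2*sm + sn*sL := by
      rw [div_le_iff₀ (by positivity : (0:ℝ) < 1024*sd)]
      calc β1 ≤ 1024*sd*(2*sm+sn*sL) := hbig
      _ = (2*sm+sn*sL)*(1024*sd) := by ring
    rw [e]
    exact le_trans le1 le2
  have hkey : sn*(2*sd+sL) + β2 + (ε^2*s^2/a^2)*sd*β1 ≤ 3*β1 := by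
    have lin : sn*(2*sd+sL) + β2 + (2*sm+sn*sL) ≤ 3*β1 := by
      rw [hβ2, hβ1]
      have hint := mul_nonneg (sub_nonneg.mpr hsn1) hsLnn
      ring_nf at hint ⊢
      linarith
    linarith [hεle]
  set T0 := ε^2*(d:ℝ)*s^2*sn/(6*a*sd*β1) with hT0_def
  have hσT : σ ≤ T0 := by
    have e : ε^2*(d:ℝ)/(6*kappa A^2)*(sn*a)/(sd*β1) = T0 := by
      rw [hT0_def, hκ2]
      field_simp
    exact e ▸ hσ2
  have hT0P : T0*P1 + T0^2*P3 ≤ (n:ℝ)*s^2*ε^2*(d:ℝ)/2 := by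
    have e3 : T0*P1 + T0^2*P3
        = ((n:ℝ)*s^2*ε^2*(d:ℝ)/6)/β1 * (sn*(2*sd+sL) + β2 + (ε^2*s^2/a^2)*sd*β1) := by
      rw [hT0_def, hP1_def, hP3_def, ← hsn2, ← hsd2]
      field_simp
    rw [e3]
    have hUnn : 0 ≤ ((n:ℝ)*s^2*ε^2*(d:ℝ)/6)/β1 := by positivity
    calc ((n:ℝ)*s^2*ε^2*(d:ℝ)/6)/β1 * (sn*(2*sd+sL) + β2 + (ε^2*s^2/a^2)*sd*β1)
        ≤ ((n:ℝ)*s^2*ε^2*(d:ℝ)/6)/β1 * (3*β1) := mul_le_mul_of_nonneg_left hkey hUnn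
    _ = (n:ℝ)*s^2*ε^2*(d:ℝ)/2 := by
        field_simp
        ring
  have key : σ*P1 + σ^2*P3 ≤ (n:ℝ)*s^2*ε^2*(d:ℝ)/2 := by
    have h1 : σ*P1 ≤ T0*P1 := mul_le_mul_of_nonneg_right hσT hP1nn
    have h2 : σ^2*P3 ≤ T0^2*P3 := by
      apply mul_le_mul_of_nonneg_right ?_ hP3nn
      exact pow_le_pow_left₀ hσ.le hσT 2
    calc σ*P1 + σ^2*P3 ≤ T0*P1 + T0^2*P3 := add_le_add h1 h2
    _ ≤ (n:ℝ)*s^2*ε^2*(d:ℝ)/2 := hT0P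
  set Zm := ZStack n d with hZm_def
  set T := Zmᵀ * S with hT_def
  set Nz := blk W i * (Aᵀ * T) + A * (Wᵀ * S) + σ • (blk W i * (Wᵀ * S)) with hNz_def
  set c := ((n:ℝ) * a^2)⁻¹ with hc_def
  have hcpos : 0 < c := by
    rw [hc_def]
    exact inv_pos.mpr (mul_pos hn0' (by positivity))
  have hblk : blk (Lop A W σ S) i = c • (A * (Aᵀ * T) + σ • Nz) := by
    have e0 : (Zm * A * Aᵀ * Zmᵀ + σ • delta A W σ) * S
        = Zm * (A * (Aᵀ * T)) + σ • (W * (Aᵀ * T) + Zm * (A * (Wᵀ * S)) + σ • (W * (Wᵀ * S))) := by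
      rw [hT_def]
      unfold delta
      rw [← hZm_def]
      simp only [Matrix.add_mul, Matrix.smul_mul, Matrix.mul_assoc]
    have e1 : Lop A W σ S = c • ((Zm * A * Aᵀ * Zmᵀ + σ • delta A W σ) * S) := by
      unfold Lop
      rw [← hZm_def, ← ha_def, ← hc_def]
    rw [e1, e0]
    simp only [blk_smul, blk_add, blk_mul]
    rw [hZm_def, blk_Z]
    simp only [Matrix.one_mul]
    rw [hNz_def]
  have hTsum : T = ∑ j : Fin n, blk S j := by
    rw [hT_def, hZm_def]; exact Zt_mul S
  have hfrobT : frob T ≤ (n:ℝ)*sd := by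
    rw [hTsum]
    calc frob (∑ j : Fin n, blk S j) ≤ ∑ j : Fin n, frob (blk S j) := frob_sum_le _ _
    _ = ∑ _j : Fin n, sd :=
        Finset.sum_congr rfl fun j _ => by rw [frob_of_isOrth (hSorth j), ← hsd_def]
    _ = (n:ℝ)*sd := by
        rw [Finset.sum_const, Finset.card_univ, Fintype.card_fin, nsmul_eq_mul]
  have hfrobS : frob S = sn*sd := by
    have h1 : frob S^2 = ∑ j : Fin n, frob (blk S j)^2 := frob_sq_blocks S
    have h2 : frob S^2 = (sn*sd)^2 := by
      rw [h1]
      have e : ∀ j : Fin n, frob (blk S j)^2 = sd^2 := fun j => by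
        rw [frob_of_isOrth (hSorth j), ← hsd_def]
      rw [Finset.sum_congr rfl fun j _ => e j, Finset.sum_const, Finset.card_univ,
        Fintype.card_fin, nsmul_eq_mul]
      have hsq : sn^2 = (n:ℝ) := by rw [sq, hsn2]
      rw [mul_pow, hsq]
    have h3 : (0:ℝ) ≤ sn*sd := by positivity
    calc frob S = Real.sqrt (frob S^2) := (Real.sqrt_sq (frob_nonneg' S)).symm
    _ = Real.sqrt ((sn*sd)^2) := by rw [h2]
    _ = sn*sd := Real.sqrt_sq h3
  have hfrobN : frob Nz ≤ P1 + σ*P3 := by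
    have t1 : frob (blk W i * (Aᵀ * T)) ≤ (2*sd+sL)*a*((n:ℝ)*sd) := by
      rw [show blk W i * (Aᵀ * T) = (blk W i * Aᵀ) * T from (Matrix.mul_assoc _ _ _).symm]
      calc frob ((blk W i * Aᵀ) * T) ≤ opNorm (blk W i * Aᵀ) * frob T := frob_mul_le_opNorm _ _
      _ ≤ ((2*sd+sL)*a)*((n:ℝ)*sd) := by
          apply mul_le_mul (hWA i) hfrobT (frob_nonneg' T) ?_
          exact mul_nonneg (by linarith) ha.le
      _ = (2*sd+sL)*a*((n:ℝ)*sd) := by ring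
    have t2 : frob (A * (Wᵀ * S)) ≤ a*(β2*(sn*sd)) := by
      calc frob (A * (Wᵀ * S)) ≤ opNorm A * frob (Wᵀ * S) := frob_mul_le_opNorm _ _
      _ ≤ a*(β2*(sn*sd)) := by
          apply mul_le_mul_of_nonneg_left ?_ ha.le
          calc frob (Wᵀ * S) ≤ opNorm W * frob S := frob_transpose_mul_le _ _
          _ ≤ β2*(sn*sd) := by
              rw [hfrobS]
              exact mul_le_mul_of_nonneg_right hW (by positivity)
    have t3 : frob (σ • (blk W i * (Wᵀ * S))) ≤ σ*(6*sd*β1^2) := by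
      rw [frob_smul, abs_of_pos hσ]
      apply mul_le_mul_of_nonneg_left ?_ hσ.le
      rw [show blk W i * (Wᵀ * S) = blk W i * Wᵀ * S from (Matrix.mul_assoc _ _ _).symm]
      exact hSxi i
    calc frob Nz ≤ frob (blk W i * (Aᵀ*T) + A*(Wᵀ*S)) + frob (σ • (blk W i * (Wᵀ*S))) := by
          rw [hNz_def]; exact frob_add_le _ _
    _ ≤ (frob (blk W i * (Aᵀ*T)) + frob (A*(Wᵀ*S))) + frob (σ • (blk W i * (Wᵀ*S))) := by
          linarith [frob_add_le (blk W i * (Aᵀ*T)) (A*(Wᵀ*S))]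
    _ ≤ ((2*sd+sL)*a*((n:ℝ)*sd) + a*(β2*(sn*sd))) + σ*(6*sd*β1^2) := by
          linarith [t1, t2, t3]
    _ = P1 + σ*P3 := by rw [hP1_def, hP3_def]
  set K := (ε*(sn*sd)+1)*s^2/((n:ℝ)*a^2) with hK_def
  have hKpos : 0 < K := by
    rw [hK_def]
    apply div_pos ?_ (by positivity)
    have h1 : 0 < ε*(sn*sd) := by positivity
    exact mul_pos (by linarith) (pow_pos hs 2)
  have main : ∀ δ : ℝ, 0 < δ → δ ≤ 1 →
      (1 - ε^2*(d:ℝ))/kappa A^2 ≤ sigmaMin (blk (Lop A W σ S) i) + K*δ := by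
    intro δ hδ0 hδ1
    have hdF' : dF S Zm ≤ ε*(sn*sd) := by
      calc dF S Zm ≤ ε * Real.sqrt ((n:ℝ)*(d:ℝ)) := hSdF
      _ = ε*(sn*sd) := by
          rw [Real.sqrt_mul (by positivity : (0:ℝ) ≤ (n:ℝ)), ← hsn_def, ← hsd_def]
    obtain ⟨Q, hQ, hQF⟩ : ∃ Q, IsOrth Q ∧ frob (S - Zm*Q) ≤ ε*(sn*sd) + δ := by
      have hne : {r : ℝ | ∃ Q, IsOrth Q ∧ r = frob (S - Zm * Q)}.Nonempty :=
        ⟨frob (S - Zm * 1), 1, isOrth_one, rfl⟩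
      have hlt : sInf {r : ℝ | ∃ Q, IsOrth Q ∧ r = frob (S - Zm * Q)} < ε*(sn*sd) + δ := by
        have e : dF S Zm = sInf {r : ℝ | ∃ Q, IsOrth Q ∧ r = frob (S - Zm * Q)} := rfl
        rw [← e]; linarith only [hdF', hδ0]
      obtain ⟨r, hrmem, hr⟩ := exists_lt_of_csInf_lt hne hlt
      obtain ⟨Q, hQ, rfl⟩ := hrmem
      exact ⟨Q, hQ, hr.le⟩
    have hsumQ : ∑ j : Fin n, frob (blk S j - Q)^2 ≤ (ε*(sn*sd) + δ)^2 := by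
      have e : ∀ j : Fin n, blk (S - Zm*Q) j = blk S j - Q := by
        intro j
        rw [blk_sub, blk_mul, hZm_def, blk_Z, Matrix.one_mul]
      calc ∑ j : Fin n, frob (blk S j - Q)^2
          = ∑ j : Fin n, frob (blk (S - Zm*Q) j)^2 :=
            Finset.sum_congr rfl fun j _ => by rw [e j]
      _ = frob (S - Zm*Q)^2 := (frob_sq_blocks _).symm
      _ ≤ (ε*(sn*sd)+δ)^2 := pow_le_pow_left₀ (frob_nonneg' _) hQF 2
    have hsig : c*(((n:ℝ) - (ε*(sn*sd)+δ)^2/2)*s^2 - σ*(P1 + σ*P3))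
        ≤ sigmaMin (blk (Lop A W σ S) i) := by
      apply le_sigmaMin
      intro u hu
      set y := u ᵥ* (A*Aᵀ) with hy_def
      set r := y ᵥ* T with hr_def
      have hyn : s^2 ≤ vnorm y := by
        have h1 : (u ᵥ* A) ⬝ᵥ (u ᵥ* A) = y ⬝ᵥ u := by
          rw [vecMul_dot u A A, Matrix.dotProduct_mulVec]
        have h2 : s ≤ vnorm (u ᵥ* A) := sigmaMin_le A hu
        have h3 : s^2 ≤ vnorm (u ᵥ* A)^2 := pow_le_pow_left₀ hs.le h2 2
        have h4 : y ⬝ᵥ u ≤ vnorm y := by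
          calc y ⬝ᵥ u ≤ vnorm y * vnorm u := dot_le _ _
          _ = vnorm y := by rw [hu, mul_one]
        calc s^2 ≤ vnorm (u ᵥ* A)^2 := h3
        _ = (u ᵥ* A) ⬝ᵥ (u ᵥ* A) := (dot_self_eq _).symm
        _ = y ⬝ᵥ u := h1
        _ ≤ vnorm y := h4
      have hypos : 0 < vnorm y := lt_of_lt_of_le (pow_pos hs 2) hyn
      have hquad : ((n:ℝ) - (ε*(sn*sd)+δ)^2/2)*vnorm y^2 ≤ r ⬝ᵥ (y ᵥ* Q) := by
        have hrsum : r = ∑ j : Fin n, y ᵥ* blk S j := by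
          rw [hr_def, hTsum, vecMul_sum_mat]
        have each : ∀ j : Fin n,
            (1 - frob (blk S j - Q)^2/2)*vnorm y^2 ≤ (y ᵥ* blk S j) ⬝ᵥ (y ᵥ* Q) := by
          intro j
          have hMo := hSorth j
          have hpp : (y ᵥ* blk S j) ⬝ᵥ (y ᵥ* blk S j) = vnorm y^2 := by
            rw [vecMul_dot, hMo.2, Matrix.one_mulVec, dot_self_eq]
          have hqq : (y ᵥ* Q) ⬝ᵥ (y ᵥ* Q) = vnorm y^2 := by
            rw [vecMul_dot, hQ.2, Matrix.one_mulVec, dot_self_eq]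
          have hdiff : vnorm (y ᵥ* (blk S j - Q)) ≤ frob (blk S j - Q) * vnorm y :=
            vecMul_vnorm_le_frob _ _
          have hdiff2 : vnorm (y ᵥ* (blk S j - Q))^2 ≤ (frob (blk S j - Q)*vnorm y)^2 :=
            pow_le_pow_left₀ (vnorm_nonneg' _) hdiff 2
          have hexp : vnorm (y ᵥ* (blk S j - Q))^2
              = 2*vnorm y^2 - 2*((y ᵥ* blk S j) ⬝ᵥ (y ᵥ* Q)) := by
            rw [← dot_self_eq, Matrix.vecMul_sub, sub_dotProduct, dotProduct_sub,
              dotProduct_sub, hpp, hqq, dotProduct_comm (y ᵥ* Q) (y ᵥ* blk S j)]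
            ring
          have e2 : (frob (blk S j - Q)*vnorm y)^2 = frob (blk S j - Q)^2*vnorm y^2 := by ring
          rw [e2] at hdiff2
          linarith only [hexp, hdiff2]
        calc ((n:ℝ) - (ε*(sn*sd)+δ)^2/2)*vnorm y^2
            ≤ ((n:ℝ) - (∑ j : Fin n, frob (blk S j - Q)^2)/2)*vnorm y^2 := by
              have hint := mul_le_mul_of_nonneg_right hsumQ (sq_nonneg (vnorm y))
              ring_nf at hint ⊢
              linarith only [hint]
        _ = ∑ j : Fin n, (1 - frob (blk S j - Q)^2/2)*vnorm y^2 := by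
              rw [← Finset.sum_mul]
              congr 1
              rw [Finset.sum_sub_distrib, Finset.sum_const, Finset.card_univ, Fintype.card_fin,
                nsmul_eq_mul, mul_one, ← Finset.sum_div]
        _ ≤ ∑ j : Fin n, (y ᵥ* blk S j) ⬝ᵥ (y ᵥ* Q) := Finset.sum_le_sum fun j _ => each j
        _ = r ⬝ᵥ (y ᵥ* Q) := by rw [hrsum, sum_dotProduct']
      have hCS : r ⬝ᵥ (y ᵥ* Q) ≤ vnorm r * vnorm y := by
        calc r ⬝ᵥ (y ᵥ* Q) ≤ vnorm r * vnorm (y ᵥ* Q) := dot_le _ _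
        _ = vnorm r * vnorm y := by rw [vnorm_vecMul_orth hQ]
      have hrn : ((n:ℝ) - (ε*(sn*sd)+δ)^2/2)*s^2 ≤ vnorm r := by
        rcases le_or_gt ((n:ℝ) - (ε*(sn*sd)+δ)^2/2) 0 with h | h
        · have h1 := mul_nonneg (neg_nonneg.mpr h) (sq_nonneg s)
          have h2 := vnorm_nonneg' r
          nlinarith only [h1, h2]
        · have h5 : ((n:ℝ) - (ε*(sn*sd)+δ)^2/2)*vnorm y ≤ vnorm r := by
            have hq := le_trans hquad hCS
            nlinarith only [hq, hypos]
          have h6 := mul_nonneg h.le (sub_nonneg.mpr hyn)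
          nlinarith only [h5, h6]
      have hvec : u ᵥ* blk (Lop A W σ S) i = c • (r + σ • (u ᵥ* Nz)) := by
        rw [hblk, vecMul_smul_mat, Matrix.vecMul_add, vecMul_smul_mat]
        congr 2
        rw [show A*(Aᵀ*T) = (A*Aᵀ)*T from (Matrix.mul_assoc _ _ _).symm,
          ← Matrix.vecMul_vecMul, hr_def, hy_def]
      have hnoise : vnorm (σ • (u ᵥ* Nz)) ≤ σ*(P1 + σ*P3) := by
        rw [vnorm_smul, abs_of_pos hσ]
        apply mul_le_mul_of_nonneg_left ?_ hσ.le
        calc vnorm (u ᵥ* Nz) ≤ frob Nz * vnorm u := vecMul_vnorm_le_frob _ _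
        _ = frob Nz := by rw [hu, mul_one]
        _ ≤ P1 + σ*P3 := hfrobN
      calc c*(((n:ℝ) - (ε*(sn*sd)+δ)^2/2)*s^2 - σ*(P1+σ*P3))
          ≤ c*(vnorm r - vnorm (σ • (u ᵥ* Nz))) := by
            apply mul_le_mul_of_nonneg_left ?_ hcpos.le
            exact sub_le_sub hrn hnoise
      _ ≤ c*(vnorm (r + σ • (u ᵥ* Nz))) :=
            mul_le_mul_of_nonneg_left (vnorm_sub_ge _ _) hcpos.le
      _ = vnorm (u ᵥ* blk (Lop A W σ S) i) := by
            rw [hvec, vnorm_smul, abs_of_pos hcpos]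
    have hE2 : (ε*(sn*sd))^2 = ε^2*((n:ℝ)*(d:ℝ)) := by
      have e : (ε*(sn*sd))^2 = ε^2*((sn*sn)*(sd*sd)) := by ring
      rw [e, hsn2, hsd2]
    have hF2 : (ε*(sn*sd)+δ)^2 ≤ ε^2*((n:ℝ)*(d:ℝ)) + 2*(ε*(sn*sd))*δ + δ := by
      have hδsq : δ^2 ≤ δ := by
        have h9 := mul_nonneg hδ0.le (sub_nonneg.mpr hδ1)
        nlinarith only [h9]
      have e : (ε*(sn*sd)+δ)^2 = (ε*(sn*sd))^2 + 2*(ε*(sn*sd))*δ + δ^2 := by ring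
      rw [e, hE2]
      linarith only [hδsq]
    have hcore : (1-ε^2*(d:ℝ))*(n:ℝ)*s^2 - (ε*(sn*sd)+1)*s^2*δ
        ≤ ((n:ℝ) - (ε*(sn*sd)+δ)^2/2)*s^2 - σ*(P1+σ*P3) := by
      have hA2 := mul_le_mul_of_nonneg_right hF2 (by positivity : (0:ℝ) ≤ s^2/2)
      have hA3 := mul_nonneg hδ0.le (sq_nonneg s)
      have key' := key
      ring_nf at hA2 hA3 key' ⊢
      linarith only [hA2, hA3, key']
    have hGK : (1-ε^2*(d:ℝ))/kappa A^2 - K*δ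
        = c*((1-ε^2*(d:ℝ))*(n:ℝ)*s^2 - (ε*(sn*sd)+1)*s^2*δ) := by
      rw [hκ2, hK_def, hc_def]
      field_simp
    have hmul := mul_le_mul_of_nonneg_left hcore hcpos.le
    linarith only [hsig, hmul, hGK.le, hGK.ge]
  apply le_of_forall_pos_le_add
  intro η hη
  have hδ0 : 0 < min 1 (η/K) := lt_min one_pos (div_pos hη hKpos)
  have h := main _ hδ0 (min_le_left _ _)
  have h2 : K * min 1 (η/K) ≤ η := by
    calc K * min 1 (η/K) ≤ K * (η/K) := mul_le_mul_of_nonneg_left (min_le_right _ _) hKpos.le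
    _ = η := by field_simp
  linarith only [h, h2]


end GOPP
end

section
/- Let C ∈ ℝ^{nd×nd} be symmetric and let S ∈ O(d)^{⊗n}. If there exists a block-diagonal matrix Λ ∈ ℝ^{nd×nd} (with n diagonal blocks of size d×d) such that CS = ΛS and Λ − C ⪰ 0, then G = SS^T is a global maximizer of the SDP: maximize ⟨C,G⟩ over symmetric G ∈ ℝ^{nd×nd} with G ⪰ 0 and each i-th diagonal d×d block G_ii = I_d. Moreover, if in addition rank(Λ − C) = (n−1)d, then SS^T is the unique global maximizer. -/
open MeasureTheory Matrix Filter

namespace GOPP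

/-- Helper: trace of `Aᵀ * A` is a sum of squares, hence nonneg. -/
lemma trace_transpose_mul_self_nonneg {m' n' : Type*} [Fintype m'] [Fintype n']
    (A : Matrix m' n' ℝ) : 0 ≤ (Aᴴ * A).trace := by
  have : (Aᴴ * A).trace = ∑ q : n', ∑ p : m', A p q * A p q := by
    simp [Matrix.trace, Matrix.diag, Matrix.mul_apply, Matrix.conjTranspose_apply]
  rw [this]
  exact Finset.sum_nonneg fun q _ => Finset.sum_nonneg fun p _ => mul_self_nonneg _

/-- Helper: if trace of `Aᵀ * A` vanishes then `A = 0`. -/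
lemma eq_zero_of_trace_transpose_mul_self {m' n' : Type*} [Fintype m'] [Fintype n']
    {A : Matrix m' n' ℝ} (h : (Aᴴ * A).trace = 0) : A = 0 := by
  have hsum : ∑ q : n', ∑ p : m', A p q * A p q = 0 := by
    simpa [Matrix.trace, Matrix.diag, Matrix.mul_apply, Matrix.conjTranspose_apply] using h
  ext i j
  have h1 := (Finset.sum_eq_zero_iff_of_nonneg
    (fun q _ => Finset.sum_nonneg fun p _ => mul_self_nonneg (A p q))).mp hsum j
    (Finset.mem_univ _)
  have h2 := (Finset.sum_eq_zero_iff_of_nonneg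
    (fun p _ => mul_self_nonneg (A p j))).mp h1 i (Finset.mem_univ _)
  simpa using mul_self_eq_zero.mp h2

/-- Helper: trace of a product of two PSD matrices equals trace of `Xᵀ X` for
`X = N * Bᵀ` where `M = Nᵀ N`, `G = Bᵀ B`. -/
lemma trace_mul_eq_of_decomp {N' : Type*} [Fintype N'] [DecidableEq N']
    (Nm B : Matrix N' N' ℝ) :
    ((Nmᴴ * Nm) * (Bᴴ * B)).trace = ((Nm * Bᴴ)ᴴ * (Nm * Bᴴ)).trace := by
  have h1 : (Nm * Bᴴ)ᴴ * (Nm * Bᴴ) = B * ((Nmᴴ * Nm) * Bᴴ) := by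
    rw [Matrix.conjTranspose_mul, Matrix.conjTranspose_conjTranspose]
    noncomm_ring
  calc ((Nmᴴ * Nm) * (Bᴴ * B)).trace = ((Nmᴴ * Nm * Bᴴ) * B).trace := by
        congr 1; noncomm_ring
    _ = (B * (Nmᴴ * Nm * Bᴴ)).trace := Matrix.trace_mul_comm _ _
    _ = ((Nm * Bᴴ)ᴴ * (Nm * Bᴴ)).trace := by rw [h1]

open scoped MatrixOrder ComplexOrder Matrix.Norms.L2Operator in
lemma psd_exists_decomp {N' : Type*} [Fintype N'] [DecidableEq N'] {M : Matrix N' N' ℝ}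
    (hM : M.PosSemidef) : ∃ B : Matrix N' N' ℝ, M = Bᴴ * B := by
  obtain ⟨B, hB⟩ := CStarAlgebra.nonneg_iff_eq_star_mul_self.mp hM.nonneg
  exact ⟨B, by simpa [star_eq_conjTranspose] using hB⟩

/-- Helper: trace of a product of PSD matrices is nonneg. -/
lemma trace_psd_mul_nonneg {N' : Type*} [Fintype N'] [DecidableEq N']
    {M G : Matrix N' N' ℝ} (hM : M.PosSemidef) (hG : G.PosSemidef) :
    0 ≤ (M * G).trace := by
  obtain ⟨Nm, rfl⟩ := psd_exists_decomp hM
  obtain ⟨B, rfl⟩ := psd_exists_decomp hG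
  rw [trace_mul_eq_of_decomp]
  exact trace_transpose_mul_self_nonneg _

/-- Helper: if the trace of a product of PSD matrices vanishes, the product is zero. -/
lemma psd_mul_eq_zero_of_trace {N' : Type*} [Fintype N'] [DecidableEq N']
    {M G : Matrix N' N' ℝ} (hM : M.PosSemidef) (hG : G.PosSemidef)
    (h : (M * G).trace = 0) : M * G = 0 := by
  obtain ⟨Nm, rfl⟩ := psd_exists_decomp hM
  obtain ⟨B, rfl⟩ := psd_exists_decomp hG
  rw [trace_mul_eq_of_decomp] at h
  have h0 : Nm * Bᴴ = 0 := eq_zero_of_trace_transpose_mul_self h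
  calc Nmᴴ * Nm * (Bᴴ * B) = Nmᴴ * (Nm * Bᴴ) * B := by noncomm_ring
    _ = 0 := by rw [h0, Matrix.mul_zero, Matrix.zero_mul]

/-- Helper: trace of `Lam * G` equals trace of `Lam` when `Lam` is block diagonal and
the diagonal blocks of `G` are all the identity. -/
lemma trace_blockdiag_mul {n d : ℕ}
    (Lam G : Matrix (Fin n × Fin d) (Fin n × Fin d) ℝ)
    (hLamDiag : ∀ (i j : Fin n) (a b : Fin d), i ≠ j → Lam (i, a) (j, b) = 0)
    (hblk : ∀ i, dblk G i = 1) : (Lam * G).trace = Lam.trace := by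
  have hG : ∀ (i : Fin n) (b a : Fin d), G (i, b) (i, a) = if b = a then 1 else 0 := by
    intro i b a
    have := Matrix.ext_iff.mpr (hblk i) b a
    simpa [dblk, Matrix.one_apply] using this
  have key : ∀ (i : Fin n) (a : Fin d),
      (Lam * G) (i, a) (i, a) = Lam (i, a) (i, a) := by
    intro i a
    rw [Matrix.mul_apply, Fintype.sum_prod_type]
    rw [Finset.sum_eq_single i]
    · rw [Finset.sum_congr rfl (fun b _ => by rw [hG i b a])]
      simp [Finset.sum_ite_eq]
    · intro j _ hj
      exact Finset.sum_eq_zero fun b _ => by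
        rw [hLamDiag i j a b (fun h => hj h.symm), zero_mul]
    · intro h; exact absurd (Finset.mem_univ i) h
  simp only [Matrix.trace, Matrix.diag]
  rw [Fintype.sum_prod_type, Fintype.sum_prod_type]
  exact Finset.sum_congr rfl fun i _ => Finset.sum_congr rfl fun a _ => key i a

/-- Theorem 5.9: sufficient optimality condition for the SDP relaxation. If
CS = ΛS with Λ block-diagonal and Λ − C ⪰ 0, then SSᵀ is a global maximizer of the SDP;
if moreover rank(Λ − C) = (n−1)d, it is the unique one. -/
theorem sdp_optimality (n d : ℕ) (hn : 1 ≤ n) (hd : 1 ≤ d)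
    (Cm : Matrix (Fin n × Fin d) (Fin n × Fin d) ℝ) (hC : Cmᵀ = Cm)
    (S : Matrix (Fin n × Fin d) (Fin d) ℝ) (hS : OrthBlocks S)
    (Lam : Matrix (Fin n × Fin d) (Fin n × Fin d) ℝ)
    (hLamDiag : ∀ (i j : Fin n) (a b : Fin d), i ≠ j → Lam (i, a) (j, b) = 0)
    (hEq : Cm * S = Lam * S) (hPSD : (Lam - Cm).PosSemidef) :
    (∀ G : Matrix (Fin n × Fin d) (Fin n × Fin d) ℝ,
      G.PosSemidef → (∀ i, dblk G i = 1) →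
      Matrix.trace (Cmᵀ * G) ≤ Matrix.trace (Cmᵀ * (S * Sᵀ))) ∧
    ((Lam - Cm).rank = (n - 1) * d →
      ∀ G : Matrix (Fin n × Fin d) (Fin n × Fin d) ℝ,
        G.PosSemidef → (∀ i, dblk G i = 1) →
        Matrix.trace (Cmᵀ * G) = Matrix.trace (Cmᵀ * (S * Sᵀ)) →
        G = S * Sᵀ) := by
  -- Notation: M = Lam - Cm is PSD and M * S = 0.
  set M : Matrix (Fin n × Fin d) (Fin n × Fin d) ℝ := Lam - Cm with hM
  have hMS : M * S = 0 := by
    rw [hM, Matrix.sub_mul, hEq, sub_self]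
  -- Sᵀ * S = n • 1
  have hSS : Sᵀ * S = (n : ℝ) • (1 : Matrix (Fin d) (Fin d) ℝ) := by
    ext a b
    rw [Matrix.mul_apply, Fintype.sum_prod_type]
    have hblkeq : ∀ i : Fin n, ∑ c : Fin d, S (i, c) a * S (i, c) b
        = (1 : Matrix (Fin d) (Fin d) ℝ) a b := by
      intro i
      have := Matrix.ext_iff.mpr (hS i).1 a b
      simpa [Matrix.mul_apply, blk, Matrix.transpose_apply] using this
    rw [Finset.sum_congr rfl fun i _ => by
      simpa [Matrix.transpose_apply] using hblkeq i]
    simp [Matrix.smul_apply, mul_comm]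
  -- diagonal blocks of S * Sᵀ are the identity
  have hblkSS : ∀ i, dblk (S * Sᵀ) i = 1 := by
    intro i
    ext a b
    have := Matrix.ext_iff.mpr (hS i).2 a b
    simpa [dblk, Matrix.mul_apply, blk, Matrix.transpose_apply] using this
  -- trace(Cm * (S * Sᵀ)) = trace Lam
  have htrS : Matrix.trace (Cmᵀ * (S * Sᵀ)) = Lam.trace := by
    rw [hC, ← Matrix.mul_assoc, hEq, Matrix.mul_assoc]
    exact trace_blockdiag_mul Lam _ hLamDiag hblkSS
  -- trace(Cm * G) = trace Lam - trace (M * G) for feasible G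
  have htrG : ∀ G : Matrix (Fin n × Fin d) (Fin n × Fin d) ℝ,
      (∀ i, dblk G i = 1) →
      Matrix.trace (Cmᵀ * G) = Lam.trace - (M * G).trace := by
    intro G hGblk
    have : Cm = Lam - M := by rw [hM, sub_sub_cancel]
    rw [hC, this, Matrix.sub_mul, Matrix.trace_sub,
      trace_blockdiag_mul Lam G hLamDiag hGblk]
  constructor
  · -- optimality
    intro G hGpsd hGblk
    rw [htrG G hGblk, htrS]
    have := trace_psd_mul_nonneg hPSD hGpsd
    linarith
  · -- uniqueness under the rank condition
    intro hrank G hGpsd hGblk hGopt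
    -- trace (M * G) = 0, hence M * G = 0
    have htr0 : (M * G).trace = 0 := by
      rw [htrG G hGblk, htrS] at hGopt; linarith
    have hMG : M * G = 0 := psd_mul_eq_zero_of_trace hPSD hGpsd htr0
    -- kernel of M equals range of S (as linear maps on vectors)
    have hnd : (0 : ℝ) < n := by exact_mod_cast hn
    have hSinj : Function.Injective S.mulVecLin := by
      rw [← LinearMap.ker_eq_bot, LinearMap.ker_eq_bot']
      intro v hv
      have h1 : (Sᵀ * S) *ᵥ v = 0 := by
        rw [← Matrix.mulVec_mulVec]
        simpa [Matrix.mulVecLin_apply] using congrArg Sᵀ.mulVec hv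
      rw [hSS] at h1
      have h2 : (n : ℝ) • v = 0 := by
        simpa [Matrix.smul_mulVec, Matrix.one_mulVec] using h1
      have := smul_eq_zero.mp h2
      rcases this with h | h
      · exact absurd h (ne_of_gt hnd)
      · exact h
    have hrange_le : LinearMap.range S.mulVecLin ≤ LinearMap.ker M.mulVecLin := by
      rintro x ⟨v, rfl⟩
      simp only [LinearMap.mem_ker, Matrix.mulVecLin_apply, Matrix.mulVec_mulVec, hMS,
        Matrix.zero_mulVec]
    have hfinrange : Module.finrank ℝ (LinearMap.range S.mulVecLin) = d := by
      rw [LinearMap.finrank_range_of_inj hSinj]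
      simp [Module.finrank_pi]
    have hfinker : Module.finrank ℝ (LinearMap.ker M.mulVecLin) = d := by
      have hrn := LinearMap.finrank_range_add_finrank_ker M.mulVecLin
      have hdom : Module.finrank ℝ ((Fin n × Fin d) → ℝ) = n * d := by
        simp [Module.finrank_pi]
      have hrk : Module.finrank ℝ (LinearMap.range M.mulVecLin) = (n - 1) * d := hrank
      rw [hdom, hrk] at hrn
      have hnd' : n * d = (n - 1) * d + d := by
        have : n - 1 + 1 = n := Nat.succ_pred_eq_of_pos hn
        calc n * d = (n - 1 + 1) * d := by rw [this]
          _ = (n - 1) * d + d := by ring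
      omega
    have hker_eq : LinearMap.range S.mulVecLin = LinearMap.ker M.mulVecLin :=
      Submodule.eq_of_le_of_finrank_le hrange_le (by rw [hfinrange, hfinker])
    -- every column of G lies in the range of S: G = S * K
    have hcol : ∀ q : Fin n × Fin d, ∃ w : Fin d → ℝ,
        S.mulVec w = fun p => G p q := by
      intro q
      have hkmem : (fun p => G p q) ∈ LinearMap.ker M.mulVecLin := by
        simp only [LinearMap.mem_ker, Matrix.mulVecLin_apply]
        funext p
        have := Matrix.ext_iff.mpr hMG p q
        simpa [Matrix.mulVec, dotProduct, Matrix.mul_apply] using this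
      rw [← hker_eq] at hkmem
      obtain ⟨v, hv⟩ := hkmem
      exact ⟨v, hv⟩
    choose w hw using hcol
    set K : Matrix (Fin d) (Fin n × Fin d) ℝ := Matrix.of fun a q => w q a with hKdef
    have hGK : G = S * K := by
      ext p q
      have := congrFun (hw q) p
      simpa [Matrix.mulVec, dotProduct, Matrix.mul_apply, hKdef] using this.symm
    -- G is symmetric
    have hGsym : Gᵀ = G := by
      have := hGpsd.1
      ext p q
      have h1 := Matrix.ext_iff.mpr this p q
      simpa [Matrix.conjTranspose_apply, Matrix.transpose_apply] using h1
    -- write G = S * Y * Sᵀ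
    have hG2 : G = Kᵀ * Sᵀ := by
      rw [← hGsym, hGK, Matrix.transpose_mul]
    have h1 : G * S = (n : ℝ) • Kᵀ := by
      rw [hG2, Matrix.mul_assoc, hSS, Matrix.mul_smul, Matrix.mul_one]
    have h2 : G * S = S * (K * S) := by rw [hGK, Matrix.mul_assoc]
    have hKT : Kᵀ = (n : ℝ)⁻¹ • (S * (K * S)) := by
      rw [← h2, h1, smul_smul, inv_mul_cancel₀ (ne_of_gt hnd), one_smul]
    set Y : Matrix (Fin d) (Fin d) ℝ := (n : ℝ)⁻¹ • (K * S)ᵀ with hYdef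
    have hKY : K = Y * Sᵀ := by
      have := congrArg Matrix.transpose hKT
      rw [Matrix.transpose_transpose, Matrix.transpose_smul, Matrix.transpose_mul] at this
      rw [this, hYdef, Matrix.smul_mul]
    have hGY : G = S * Y * Sᵀ := by rw [hGK, hKY, Matrix.mul_assoc]
    -- diagonal block identity forces Y = 1
    have i0 : Fin n := ⟨0, hn⟩
    have hdblkY : blk S i0 * Y * (blk S i0)ᵀ = 1 := by
      have hb := hGblk i0
      rw [hGY] at hb
      ext a b
      have := Matrix.ext_iff.mpr hb a b
      rw [← this]
      simp [dblk, blk, Matrix.mul_apply]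
    have hY1 : Y = 1 := by
      have h3 : (blk S i0)ᵀ * (blk S i0 * Y * (blk S i0)ᵀ) * blk S i0
          = (blk S i0)ᵀ * blk S i0 := by rw [hdblkY, Matrix.mul_one]
      calc Y = 1 * Y * 1 := by rw [Matrix.one_mul, Matrix.mul_one]
        _ = ((blk S i0)ᵀ * blk S i0) * Y * ((blk S i0)ᵀ * blk S i0) := by
            rw [(hS i0).1]
        _ = (blk S i0)ᵀ * (blk S i0 * Y * (blk S i0)ᵀ) * blk S i0 := by
            noncomm_ring
        _ = (blk S i0)ᵀ * blk S i0 := h3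
        _ = 1 := (hS i0).1
    rw [hGY, hY1, Matrix.mul_one]

end GOPP
end
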